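/- Let q be a prime power, let ω be an element of F_{q²} not in F_q, and let G be the subgroup of PGL₂(F_q) that fixes ω under the Möbius action on P¹(F_{q²}). Writing r := ω + ω^q and s := ω^{q+1}, the group G consists exactly of the classes of the matrices [[a, −sb],[b, a−rb]] with [a:b] ∈ P¹(F_q) (and determinant nonzero). -/

import Mathlib

open Matrix
open scoped LinearAlgebra.Projectivization

/-- The Möbius action of `GL(2,K)` on the projective line `ℙ K (Fin 2 → K)`.
Since scalar matrices act trivially, this realizes the action of `PGL₂(K)`. -/
noncomputable def mobius {K : Type*} [Field K] (M : GL (Fin 2) K)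
    (p : ℙ K (Fin 2 → K)) : ℙ K (Fin 2 → K) :=
  Projectivization.map
    (LinearMap.GeneralLinearGroup.toLinearEquiv
      (Matrix.GeneralLinearGroup.toLin M)).toLinearMap
    (LinearEquiv.injective _) p

/-- The point `[x : 1]` of the projective line. -/
noncomputable def pt {K : Type*} [Field K] (x : K) : ℙ K (Fin 2 → K) :=
  Projectivization.mk K ![x, 1] (by
    intro h
    simpa using congrFun h 1)

/-- Let `q` be a prime power, `F` the field with `q` elements, `K = F_{q²}`, and
`ω ∈ K \ F`, with trace `r = ω + ω^q` and norm `s = ω^{q+1}` (elements of `F`).  An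
element of `PGL₂(F)`, represented by `M ∈ GL₂(F)` acting on `ℙ¹(K)` via Möbius
transformations, fixes `ω` if and only if `M` is a scalar multiple of a matrix
`[[a, −sb],[b, a − rb]]` with `[a : b] ∈ ℙ¹(F)` (i.e. `(a,b) ≠ (0,0)`). -/
theorem stabilizer_of_omega_description
    {F : Type*} [Field F] [Fintype F] (q : ℕ) (hq : Fintype.card F = q)
    {K : Type*} [Field K] [Fintype K] [Algebra F K]
    (hK : Fintype.card K = q ^ 2)
    (ω : K) (hω : ω ∉ Set.range (algebraMap F K))
    (r s : F) (hr : algebraMap F K r = ω + ω ^ q)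
    (hs : algebraMap F K s = ω ^ (q + 1))
    (M : GL (Fin 2) F) :
    mobius (Matrix.GeneralLinearGroup.map (algebraMap F K) M) (pt ω) = pt ω ↔
      ∃ a b : F, ¬ (a = 0 ∧ b = 0) ∧ ∃ c : Fˣ,
        (M : Matrix (Fin 2) (Fin 2) F) = (c : F) • !![a, -(s * b); b, a - r * b] := by
  set φ := algebraMap F K with hφdef
  have hφ : Function.Injective φ := (algebraMap F K).injective
  set M' := Matrix.GeneralLinearGroup.map (algebraMap F K) M with hM'
  have hent : ∀ i j, (M' : Matrix (Fin 2) (Fin 2) K) i j = φ ((M : Matrix (Fin 2) (Fin 2) F) i j) :=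
    fun i j => Matrix.GeneralLinearGroup.map_apply (algebraMap F K) i j M
  have hω2 : ω * ω = φ r * ω - φ s := by
    have h1 : φ r * ω = ω * ω + φ s := by rw [hr, hs, pow_succ]; ring
    linear_combination -h1
  have hlin : ∀ x y : F, φ x * ω = φ y → x = 0 ∧ y = 0 := by
    intro x y h
    have hx : x = 0 := by
      by_contra hx
      refine hω ⟨y / x, ?_⟩
      rw [hφdef] at h ⊢
      rw [map_div₀, div_eq_iff (by simpa using hx), mul_comm]
      exact h.symm
    refine ⟨hx, hφ ?_⟩
    rw [← h, hx]; simp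
  have hv0 : (![ω, 1] : Fin 2 → K) ≠ 0 := fun h => by simpa using congrFun h 1
  have hne : (M' : Matrix (Fin 2) (Fin 2) K).mulVec ![ω, 1] ≠ 0 := by
    intro h
    apply hv0
    have h2 : ((M'⁻¹ : GL (Fin 2) K) : Matrix (Fin 2) (Fin 2) K).mulVec
        ((M' : Matrix (Fin 2) (Fin 2) K).mulVec ![ω, 1]) = 0 := by
      rw [h, Matrix.mulVec_zero]
    rwa [Matrix.mulVec_mulVec, Units.inv_mul, Matrix.one_mulVec] at h2
  have hv : (⇑(Matrix.GeneralLinearGroup.toLin M').toLinearEquiv : (Fin 2 → K) → Fin 2 → K)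
      ![ω, 1] = (M' : Matrix (Fin 2) (Fin 2) K).mulVec ![ω, 1] := by
    exact Matrix.GeneralLinearGroup.toLin_apply (A := M') _
  have h1 : mobius M' (pt ω) =
      Projectivization.mk K ((M' : Matrix (Fin 2) (Fin 2) K).mulVec ![ω, 1]) hne := by
    rw [mobius, pt, Projectivization.map_mk]
    exact (Projectivization.mk_eq_mk_iff K _ _ _ _).mpr ⟨1, by rw [one_smul]; exact hv.symm⟩
  have hiff : mobius M' (pt ω) = pt ω ↔
      ∃ u : Kˣ, (u : K) • (![ω, 1] : Fin 2 → K) =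
        (M' : Matrix (Fin 2) (Fin 2) K).mulVec ![ω, 1] := by
    rw [h1, pt, Projectivization.mk_eq_mk_iff]
    exact exists_congr fun u => by rw [Units.smul_def]
  rw [hiff]
  have hmv0 : (M' : Matrix (Fin 2) (Fin 2) K).mulVec ![ω, 1] 0
      = φ ((M : Matrix (Fin 2) (Fin 2) F) 0 0) * ω + φ ((M : Matrix (Fin 2) (Fin 2) F) 0 1) := by
    simp [Matrix.mulVec, dotProduct, Fin.sum_univ_two, hent]
  have hmv1 : (M' : Matrix (Fin 2) (Fin 2) K).mulVec ![ω, 1] 1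
      = φ ((M : Matrix (Fin 2) (Fin 2) F) 1 0) * ω + φ ((M : Matrix (Fin 2) (Fin 2) F) 1 1) := by
    simp [Matrix.mulVec, dotProduct, Fin.sum_univ_two, hent]
  constructor
  · rintro ⟨u, hu⟩
    have h0 := (congrFun hu 0).trans hmv0
    have h1' := (congrFun hu 1).trans hmv1
    simp only [Pi.smul_apply, Matrix.cons_val_zero, Matrix.cons_val_one, Matrix.head_cons,
      smul_eq_mul, mul_one] at h0 h1'
    set A := (M : Matrix (Fin 2) (Fin 2) F) 0 0 with hA'
    set B := (M : Matrix (Fin 2) (Fin 2) F) 0 1 with hB'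
    set C := (M : Matrix (Fin 2) (Fin 2) F) 1 0 with hC'
    set D := (M : Matrix (Fin 2) (Fin 2) F) 1 1 with hD'
    have key : φ (C * r + D - A) * ω = φ (B + C * s) := by
      have h2 := h0
      rw [h1'] at h2
      simp only [_root_.map_add, _root_.map_sub, _root_.map_mul]
      linear_combination h2 - φ C * hω2
    obtain ⟨k1, k2⟩ := hlin _ _ key
    have hB : B = -(s * C) := by linear_combination k2
    have hD : D = A - r * C := by linear_combination k1
    refine ⟨A, C, ?_, 1, ?_⟩
    · rintro ⟨hA0, hC0⟩
      have hdet : IsUnit (M : Matrix (Fin 2) (Fin 2) F).det :=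
        (Matrix.isUnit_iff_isUnit_det _).mp M.isUnit
      rw [Matrix.det_fin_two, ← hA', ← hB', ← hC', ← hD'] at hdet
      rw [hA0, hC0] at hdet
      simp at hdet
    · have hMeq : (M : Matrix (Fin 2) (Fin 2) F) = !![A, B; C, D] := by
        refine Matrix.ext fun i j => ?_
        fin_cases i <;> fin_cases j <;> rfl
      rw [hMeq, hB, hD, Units.val_one, one_smul]
  · rintro ⟨a, b, hab, c, hM⟩
    have e00 : (M : Matrix (Fin 2) (Fin 2) F) 0 0 = c * a := by rw [hM]; simp
    have e01 : (M : Matrix (Fin 2) (Fin 2) F) 0 1 = c * -(s * b) := by rw [hM]; simp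
    have e10 : (M : Matrix (Fin 2) (Fin 2) F) 1 0 = c * b := by rw [hM]; simp
    have e11 : (M : Matrix (Fin 2) (Fin 2) F) 1 1 = c * (a - r * b) := by rw [hM]; simp
    have hinner : φ b * ω + (φ a - φ r * φ b) ≠ 0 := by
      intro h0
      have h1'' : φ b * ω = φ (r * b - a) := by
        simp only [_root_.map_sub, _root_.map_mul]
        linear_combination h0
      obtain ⟨hb0, hrb⟩ := hlin _ _ h1''
      exact hab ⟨by linear_combination r * hb0 - hrb, hb0⟩
    have hcK : φ (c : F) ≠ 0 := fun h => c.ne_zero (hφ (by simpa using h))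
    have hw : φ (c : F) * (φ b * ω + (φ a - φ r * φ b)) ≠ 0 := mul_ne_zero hcK hinner
    set w := φ (c : F) * (φ b * ω + (φ a - φ r * φ b)) with hwdef
    have g0 : w * ω = ((M' : Matrix (Fin 2) (Fin 2) K).mulVec ![ω, 1]) 0 := by
      rw [hmv0, e00, e01]
      simp only [_root_.map_mul, _root_.map_neg, hwdef]
      linear_combination (φ (c : F) * φ b) * hω2
    have g1 : w * 1 = ((M' : Matrix (Fin 2) (Fin 2) K).mulVec ![ω, 1]) 1 := by
      rw [hmv1, e10, e11]
      simp only [_root_.map_mul, _root_.map_sub, hwdef]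
      ring
    refine ⟨Units.mk0 w hw, funext fun i => ?_⟩
    fin_cases i
    · exact g0
    · exact g1
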